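/- arXiv:1901.02480 — 15 statements merged into one kernel-verified Lean document; each statement's English description precedes it below -/
import Mathlib

section
/- If 0 ≤ α < 1/(1+v_max), then for every admissible path v and every k ≥ 0, X(v,k) > 0. -/
/-- Account value `X(v,k)` for feedback gain `α`, initial value `X0`, path `v`:
`X(v,0)=X(v,1)=X0` and `X(v,k+1)=X(v,k)+α(1+v(k-1))v(k)X(v,k-1)` for `k ≥ 1`. -/
noncomputable def accountX (α X0 : ℝ) (v : ℕ → ℝ) : ℕ → ℝ
  | 0 => X0
  | 1 => X0
  | (k + 2) => accountX α X0 v (k + 1) + α * (1 + v k) * v (k + 1) * accountX α X0 v k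

/-- Sufficiency Theorem: if `0 ≤ α < 1/(1+v_max)`, then along every admissible path
the account value is positive for all time. -/
theorem sufficiency_theorem (vmin vmax α X0 : ℝ)
    (h1 : -1 < vmin) (h2 : vmin < 0) (h3 : 0 < vmax) (hX0 : 0 < X0)
    (hα0 : 0 ≤ α) (hα : α < 1 / (1 + vmax))
    (v : ℕ → ℝ) (hv : ∀ k, vmin ≤ v k ∧ v k ≤ vmax) :
    ∀ k, 0 < accountX α X0 v k := by
  have hvmax1 : (0:ℝ) < 1 + vmax := by linarith
  set c : ℝ := α * (1 + vmax) with hc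
  have hc0 : 0 ≤ c := mul_nonneg hα0 hvmax1.le
  have hc1 : c < 1 := by
    have := (lt_div_iff₀ hvmax1).mp hα
    linarith
  -- coefficient positivity
  have hcoef : ∀ k, 0 < 1 + c * min (v k) 0 := by
    intro k
    have hm : -1 ≤ min (v k) 0 := by
      exact le_min (by linarith [(hv k).1]) (by linarith)
    have : c * (-1) ≤ c * min (v k) 0 := mul_le_mul_of_nonneg_left hm hc0
    nlinarith
  -- scalar key inequality
  have hkey : ∀ k, α * (1 + v k) ≤ c * (1 + c * min (v k) 0) := by
    intro k
    rcases le_or_gt 0 (v k) with h | h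
    · rw [min_eq_right h]
      have : α * v k ≤ α * vmax := mul_le_mul_of_nonneg_left (hv k).2 hα0
      simp
      nlinarith
    · rw [min_eq_left h.le, hc]
      have hv1 : (0:ℝ) ≤ 1 + v k := by linarith [(hv k).1]
      have hvneg : (0:ℝ) ≤ -(v k) := by linarith
      have hB : (0:ℝ) ≤ 1 + vmax - α * (1 + vmax) ^ 2 := by nlinarith
      nlinarith [mul_nonneg hα0 (mul_nonneg h3.le hv1),
        mul_nonneg hα0 (mul_nonneg hvneg hB)]
  -- strengthened invariant
  have key : ∀ k, 0 < accountX α X0 v k ∧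
      (1 + c * min (v k) 0) * accountX α X0 v k ≤ accountX α X0 v (k+1) := by
    intro k
    induction k with
    | zero =>
      refine ⟨by simpa [accountX] using hX0, ?_⟩
      have : 1 + c * min (v 0) 0 ≤ 1 := by
        have : c * min (v 0) 0 ≤ 0 := mul_nonpos_of_nonneg_of_nonpos hc0 (min_le_right _ _)
        linarith
      simp only [accountX]
      nlinarith
    | succ k ih =>
      obtain ⟨hXk, hstep⟩ := ih
      have hXk1 : 0 < accountX α X0 v (k+1) :=
        lt_of_lt_of_le (mul_pos (hcoef k) hXk) hstep
      refine ⟨hXk1, ?_⟩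
      have hunf : accountX α X0 v (k+2)
          = accountX α X0 v (k+1) + α * (1 + v k) * v (k+1) * accountX α X0 v k := rfl
      rw [hunf]
      rcases le_or_gt 0 (v (k+1)) with h | h
      · rw [min_eq_right h]
        have hv1 : (0:ℝ) ≤ 1 + v k := by linarith [(hv k).1]
        have : 0 ≤ α * (1 + v k) * v (k+1) * accountX α X0 v k :=
          mul_nonneg (mul_nonneg (mul_nonneg hα0 hv1) h) hXk.le
        nlinarith
      · rw [min_eq_left h.le]
        have hvXneg : v (k+1) * accountX α X0 v k ≤ 0 :=
          mul_nonpos_of_nonpos_of_nonneg h.le hXk.le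
        have h1' : c * (1 + c * min (v k) 0) * (v (k+1) * accountX α X0 v k)
            ≤ α * (1 + v k) * (v (k+1) * accountX α X0 v k) :=
          mul_le_mul_of_nonpos_right (hkey k) hvXneg
        have hcv : c * v (k+1) ≤ 0 := mul_nonpos_of_nonneg_of_nonpos hc0 h.le
        have h2' : c * v (k+1) * accountX α X0 v (k+1)
            ≤ c * v (k+1) * ((1 + c * min (v k) 0) * accountX α X0 v k) :=
          mul_le_mul_of_nonpos_left hstep hcv
        nlinarith [h1', h2']
  intro k
  exact (key k).1
end

section
/- Suppose v_max > 1+2v_min. If α > α* := (v_max − v_min)/(|v_min|(1+v_max)²), then there exist an admissible path v and a stage k such that X(v,k) ≤ 0. -/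
set_option maxHeartbeats 1600000


/-- Necessity (nonoscillatory case): if `v_max > 1 + 2 v_min` and
`α > α* = (v_max − v_min)/(|v_min|(1+v_max)²)`, then some admissible path leads
to a nonpositive account value at some stage. -/
theorem necessity_nonoscillatory (vmin vmax α X0 : ℝ)
    (h1 : -1 < vmin) (h2 : vmin < 0) (h3 : 0 < vmax) (hX0 : 0 < X0)
    (hα0 : 0 ≤ α) (hgap : vmax > 1 + 2 * vmin)
    (hα : α > (vmax - vmin) / (|vmin| * (1 + vmax) ^ 2)) :
    ∃ v : ℕ → ℝ, (∀ k, vmin ≤ v k ∧ v k ≤ vmax) ∧ ∃ k, accountX α X0 v k ≤ 0 := by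
  have hm : (0:ℝ) < -vmin := by linarith
  have ha : (0:ℝ) < 1 + vmax := by linarith
  have h1v : (0:ℝ) < 1 + vmin := by linarith
  have habs : |vmin| = -vmin := abs_of_neg h2
  rw [habs, gt_iff_lt, div_lt_iff₀ (by positivity)] at hα
  -- hα : vmax - vmin < α * (-vmin * (1 + vmax) ^ 2)
  have hαpos : 0 < α := by
    rcases lt_or_ge 0 α with h | h
    · exact h
    · exfalso
      nlinarith [mul_nonneg (neg_nonneg.2 h) (le_of_lt (mul_pos hm (pow_pos ha 2)))]
  set v : ℕ → ℝ := fun k => if k = 0 then vmax else vmin with hv_def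
  have hv0 : v 0 = vmax := rfl
  have hvS : ∀ k, v (k + 1) = vmin := fun k => rfl
  refine ⟨v, fun k => ?_, ?_⟩
  · rcases k with _ | k
    · exact ⟨le_of_lt (lt_trans h2 h3), le_refl _⟩
    · exact ⟨le_refl _, le_of_lt (lt_trans h2 h3)⟩
  set s : ℝ := 1 + α * (1 + vmax) * vmin with hs_def
  set e : ℝ := α * (1 + vmin) * (-vmin) with he_def
  have he : 0 < e := by positivity
  have hX1 : accountX α X0 v 1 = X0 := rfl
  have hX2 : accountX α X0 v 2 = s * X0 := by
    show accountX α X0 v (0 + 2) = s * X0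
    rw [accountX]
    simp [hv_def, hs_def, accountX]
    ring
  have hX3 : accountX α X0 v 3 = (s - e) * X0 := by
    show accountX α X0 v (1 + 2) = (s - e) * X0
    rw [accountX]
    have : accountX α X0 v (1 + 1) = accountX α X0 v 2 := rfl
    rw [this, hX2, hX1]
    simp [hv_def, hs_def, he_def]
    ring
  have hrec : ∀ k : ℕ, accountX α X0 v (k + 3) =
      accountX α X0 v (k + 2) - e * accountX α X0 v (k + 1) := by
    intro k
    show accountX α X0 v ((k + 1) + 2) = _
    rw [accountX]
    rw [hvS k, hvS (k + 1), he_def]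
    ring
  by_contra hcon
  push_neg at hcon
  have hs : 0 < s := by
    have h2' := hcon 2
    rw [hX2] at h2'
    nlinarith
  -- key algebraic inequalities
  have hk1 : 0 < α * (-vmin) := mul_pos hαpos hm
  have hk2 : 0 < α * (-vmin * (1 + vmax) ^ 2) - (vmax - vmin) := by linarith
  have hC2 : 0 < s ^ 2 - s + e := by nlinarith [mul_pos hk1 hk2]
  have hgap' : (0:ℝ) < vmax - 1 - 2 * vmin := by linarith
  have hC1 : s < 2 * e := by
    have h6 : (1 + vmax) ^ 2 < (vmax - vmin) * ((1 + vmax) + 2 * (1 + vmin)) := by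
      nlinarith [mul_pos h1v hgap']
    have hw : (0:ℝ) < (1 + vmax) + 2 * (1 + vmin) := by linarith
    have h7 : (vmax - vmin) * ((1 + vmax) + 2 * (1 + vmin)) <
        α * (-vmin * (1 + vmax) ^ 2) * ((1 + vmax) + 2 * (1 + vmin)) :=
      mul_lt_mul_of_pos_right (by linarith) hw
    have h8 : (1 + vmax) ^ 2 * 1 <
        (1 + vmax) ^ 2 * (α * (-vmin) * ((1 + vmax) + 2 * (1 + vmin))) := by nlinarith
    have h9 : 1 < α * (-vmin) * ((1 + vmax) + 2 * (1 + vmin)) :=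
      lt_of_mul_lt_mul_left (by linarith) (le_of_lt (pow_pos ha 2))
    nlinarith [h9]
  set ρ : ℝ := (s - e) / s with hρ_def
  set δ : ℝ := e * (s ^ 2 - s + e) / s ^ 2 with hδ_def
  have hδpos : 0 < δ := div_pos (mul_pos he hC2) (by positivity)
  have hρhalf : ρ < 1 / 2 := by
    rw [hρ_def, div_lt_iff₀ hs]; linarith
  have hδeq : δ = ρ ^ 2 - ρ + e := by
    rw [hρ_def, hδ_def]
    field_simp
    ring
  have main : ∀ n : ℕ, accountX α X0 v (n + 3) ≤ (ρ - n * δ) * accountX α X0 v (n + 2) := by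
    intro n
    induction n with
    | zero =>
      show accountX α X0 v 3 ≤ (ρ - (0:ℕ) * δ) * accountX α X0 v 2
      rw [hX3, hX2]
      have hρs : ρ * s = s - e := div_mul_cancel₀ _ (ne_of_gt hs)
      have heq : (ρ - ((0:ℕ):ℝ) * δ) * (s * X0) = (s - e) * X0 := by
        push_cast
        rw [← hρs]; ring
      rw [heq]
    | succ n ih =>
      have hA := hcon (n + 2)
      have hB := hcon (n + 3)
      rcases le_or_gt (ρ - n * δ) 0 with hc | hc
      · exfalso
        nlinarith [mul_nonneg (neg_nonneg.2 hc) (le_of_lt hA)]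
      · have hnδ : (0:ℝ) ≤ (n : ℝ) * δ := mul_nonneg (Nat.cast_nonneg n) (le_of_lt hδpos)
        have hcρ : ρ - n * δ ≤ ρ := by linarith
        have hrw : accountX α X0 v (n + 4) =
            accountX α X0 v (n + 3) - e * accountX α X0 v (n + 2) := hrec (n + 1)
        have h1c : 0 < 1 - (ρ - n * δ) + δ := by linarith
        have hq : (ρ - n * δ) * δ ≤ (ρ - n * δ) ^ 2 - (ρ - n * δ) + e := by
          nlinarith [mul_nonneg (sub_nonneg.2 hcρ) (by linarith : (0:ℝ) ≤ 1 - ρ - (ρ - n * δ)),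
            mul_nonneg (by linarith : (0:ℝ) ≤ 1 - (ρ - n * δ)) (le_of_lt hδpos)]
        have h10 : (1 - (ρ - n * δ) + δ) * (ρ - n * δ) ≤ e := by nlinarith
        have h9 : (1 - (ρ - n * δ) + δ) * accountX α X0 v (n + 3) ≤
            (1 - (ρ - n * δ) + δ) * ((ρ - n * δ) * accountX α X0 v (n + 2)) :=
          mul_le_mul_of_nonneg_left ih (le_of_lt h1c)
        have h11 : (1 - (ρ - n * δ) + δ) * ((ρ - n * δ) * accountX α X0 v (n + 2)) ≤
            e * accountX α X0 v (n + 2) := by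
          nlinarith [mul_le_mul_of_nonneg_right h10 (le_of_lt hA)]
        push_cast
        show accountX α X0 v (n + 4) ≤ (ρ - ((n:ℝ) + 1) * δ) * accountX α X0 v (n + 3)
        rw [hrw]
        nlinarith [h9, h11]
  obtain ⟨n, hn⟩ := exists_nat_ge (ρ / δ)
  have hρn : ρ ≤ n * δ := by
    rw [div_le_iff₀ hδpos] at hn
    linarith
  have hfin := main n
  have hA := hcon (n + 2)
  have hB := hcon (n + 3)
  nlinarith [mul_nonneg (by linarith : (0:ℝ) ≤ (n:ℝ) * δ - ρ) (le_of_lt hA)]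
end

section
/- Suppose v_max ≤ 1+2v_min. If α > α_s := 1/(4|v_min|(1+v_min)), then there exist an admissible path v and a stage k such that X(v,k) ≤ 0. -/
set_option maxHeartbeats 1000000


/-- Necessity (oscillatory case): if `v_max ≤ 1 + 2 v_min` and
`α > α_s = 1/(4|v_min|(1+v_min))`, then some admissible path leads to a
nonpositive account value at some stage. -/
theorem necessity_oscillatory (vmin vmax α X0 : ℝ)
    (h1 : -1 < vmin) (h2 : vmin < 0) (h3 : 0 < vmax) (hX0 : 0 < X0)
    (hα0 : 0 ≤ α) (hgap : vmax ≤ 1 + 2 * vmin)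
    (hα : α > 1 / (4 * |vmin| * (1 + vmin))) :
    ∃ v : ℕ → ℝ, (∀ k, vmin ≤ v k ∧ v k ≤ vmax) ∧ ∃ k, accountX α X0 v k ≤ 0 := by
  refine ⟨fun _ => vmin, fun k => ⟨le_refl _, le_of_lt (h2.trans h3)⟩, ?_⟩
  set v : ℕ → ℝ := fun _ => vmin with hv
  set X : ℕ → ℝ := accountX α X0 v with hXdef
  set c : ℝ := α * (1 + vmin) * vmin with hcdef
  have hrec : ∀ n : ℕ, X (n + 2) = X (n + 1) + c * X n := by
    intro n; rw [hXdef, hcdef, accountX]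
  have hX0' : X 0 = X0 := by rw [hXdef, accountX]
  have hX1 : X 1 = X0 := by rw [hXdef, accountX]
  have hden : 0 < 4 * (-vmin) * (1 + vmin) := by nlinarith
  have habs : |vmin| = -vmin := abs_of_neg h2
  have hα' : 1 < α * (4 * (-vmin) * (1 + vmin)) := by
    rw [habs] at hα
    exact (div_lt_iff₀ hden).mp hα
  have hc : c < -(1/4) := by rw [hcdef]; nlinarith
  clear_value X c
  set δ : ℝ := -c - 1/4 with hδdef
  have hδ : 0 < δ := by rw [hδdef]; linarith
  have hc' : c = -δ - 1/4 := by rw [hδdef]; ring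
  clear_value δ
  by_contra hcon
  push_neg at hcon
  have hpos : ∀ k, 0 < X k := fun k => hcon k
  have claim : ∀ n : ℕ, X (n + 1) ≤ (1 - n * δ) * X n := by
    intro n
    induction n with
    | zero => rw [hX1, hX0']; norm_num
    | succ n ih =>
      have hXn := hpos n
      have hXn1 := hpos (n + 1)
      have hfac : 0 < 1 - (n : ℝ) * δ := by
        by_contra hle
        push_neg at hle
        nlinarith
      have hnδ : 0 ≤ (n : ℝ) * δ := by positivity
      have key : ((n : ℝ) + 1) * δ * X (n + 1) ≤ (δ + 1/4) * X n := by
        have h1' : ((n : ℝ) + 1) * δ * X (n + 1) ≤ ((n : ℝ) + 1) * δ * ((1 - n * δ) * X n) := by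
          have : 0 ≤ ((n : ℝ) + 1) * δ := by positivity
          nlinarith
        have hq : ((n : ℝ) + 1) * δ * (1 - n * δ) ≤ δ + 1/4 := by
          nlinarith [sq_nonneg ((n : ℝ) * δ - 1/2), mul_nonneg hnδ hδ.le]
        have h2' : ((n : ℝ) + 1) * δ * ((1 - n * δ) * X n) ≤ (δ + 1/4) * X n := by
          nlinarith
        linarith
      rw [hrec n, hc']
      push_cast
      nlinarith [key]
  obtain ⟨n, hn⟩ := exists_nat_gt (1 / δ)
  have hnδ : 1 < (n : ℝ) * δ := by
    rw [div_lt_iff₀ hδ] at hn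
    nlinarith
  have := claim n
  have hXn := hpos n
  have hXn1 := hpos (n + 1)
  nlinarith
end

section
/- Suppose 0 ≤ α < α_s := 1/(4|v_min|(1+v_min)), so that θ := 4α v_min(1+v_min) + 1 > 0. Then for every k ≥ 2, X(v*,k) = (X_0/(2√θ))·(λ₊^{k-1}·g₊ + λ₋^{k-1}·g₋), where λ_± := (1 ± √θ)/2 and g_± := √θ ± (2α(1+v_max)v_min + 1). -/
/-- The distinguished path: `v*(0) = v_max` and `v*(k) = v_min` for `k ≥ 1`. -/
noncomputable def vstar (vmin vmax : ℝ) : ℕ → ℝ := fun k => if k = 0 then vmax else vmin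

/-- Closed form for `X(v*,k)` in the generic (nonsingular) case `0 ≤ α < α_s`:
with `θ := 4 α v_min (1+v_min) + 1 > 0`, `λ± := (1 ± √θ)/2` and
`g± := √θ ± (2α(1+v_max)v_min + 1)`, for `k ≥ 2` we have
`X(v*,k) = (X0/(2√θ)) (λ₊^{k-1} g₊ + λ₋^{k-1} g₋)`. -/
theorem closed_form_generic (vmin vmax α X0 : ℝ)
    (h1 : -1 < vmin) (h2 : vmin < 0) (h3 : 0 < vmax) (hX0 : 0 < X0)
    (hα0 : 0 ≤ α) (hα : α < 1 / (4 * |vmin| * (1 + vmin))) :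
    0 < 4 * α * vmin * (1 + vmin) + 1 ∧
    ∀ k ≥ 2,
      accountX α X0 (vstar vmin vmax) k =
        X0 / (2 * Real.sqrt (4 * α * vmin * (1 + vmin) + 1)) *
          (((1 + Real.sqrt (4 * α * vmin * (1 + vmin) + 1)) / 2) ^ (k - 1) *
              (Real.sqrt (4 * α * vmin * (1 + vmin) + 1) + (2 * α * (1 + vmax) * vmin + 1)) +
            ((1 - Real.sqrt (4 * α * vmin * (1 + vmin) + 1)) / 2) ^ (k - 1) *
              (Real.sqrt (4 * α * vmin * (1 + vmin) + 1) - (2 * α * (1 + vmax) * vmin + 1))) := by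
  have hv1 : 0 < 1 + vmin := by linarith
  have habs : |vmin| = -vmin := abs_of_neg h2
  have hD : 0 < 4 * (-vmin) * (1 + vmin) := by nlinarith
  have hθ : 0 < 4 * α * vmin * (1 + vmin) + 1 := by
    rw [habs] at hα
    have h := (lt_div_iff₀ hD).mp (by linarith [hα] : α < 1 / (4 * (-vmin) * (1 + vmin)))
    nlinarith
  set s : ℝ := Real.sqrt (4 * α * vmin * (1 + vmin) + 1) with hsdef
  have hs : 0 < s := Real.sqrt_pos.mpr hθ
  have hs2 : s ^ 2 = 4 * α * vmin * (1 + vmin) + 1 := Real.sq_sqrt hθ.le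
  refine ⟨hθ, ?_⟩
  set b : ℝ := 2 * α * (1 + vmax) * vmin + 1 with hbdef
  have hv0 : vstar vmin vmax 0 = vmax := by simp [vstar]
  have hvm : ∀ m : ℕ, vstar vmin vmax (m + 1) = vmin := fun m => by simp [vstar]
  have key : ∀ n : ℕ,
      accountX α X0 (vstar vmin vmax) (n + 2) =
        X0 / (2 * s) * (((1 + s) / 2) ^ (n + 1) * (s + b) + ((1 - s) / 2) ^ (n + 1) * (s - b)) ∧
      accountX α X0 (vstar vmin vmax) (n + 3) =
        X0 / (2 * s) * (((1 + s) / 2) ^ (n + 2) * (s + b) + ((1 - s) / 2) ^ (n + 2) * (s - b)) := by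
    intro n
    induction n with
    | zero =>
      have e2 : accountX α X0 (vstar vmin vmax) 2 = X0 + α * (1 + vmax) * vmin * X0 := by
        show accountX α X0 (vstar vmin vmax) (0 + 2) = _
        rw [accountX, hv0, hvm 0]
        rfl
      have e3 : accountX α X0 (vstar vmin vmax) 3 =
          accountX α X0 (vstar vmin vmax) 2 + α * (1 + vmin) * vmin * X0 := by
        show accountX α X0 (vstar vmin vmax) (1 + 2) = _
        rw [accountX, hvm 0, hvm 1]
        rfl
      constructor
      · rw [e2]
        field_simp
        ring
      · rw [e3, e2]
        field_simp
        linear_combination (-s / 2) * hs2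
    | succ n ih =>
      refine ⟨ih.2, ?_⟩
      have hrec : accountX α X0 (vstar vmin vmax) (n + 4) =
          accountX α X0 (vstar vmin vmax) (n + 3) +
            α * (1 + vmin) * vmin * accountX α X0 (vstar vmin vmax) (n + 2) := by
        show accountX α X0 (vstar vmin vmax) ((n + 2) + 2) = _
        rw [accountX, hvm (n + 1), hvm (n + 2)]
      have hsq : ∀ t : ℝ, t ^ 2 = t + α * (1 + vmin) * vmin →
          ∀ m : ℕ, t ^ (m + 3) = t ^ (m + 2) + α * (1 + vmin) * vmin * t ^ (m + 1) := by
        intro t ht m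
        calc t ^ (m + 3) = t ^ (m + 1) * t ^ 2 := by ring
          _ = t ^ (m + 1) * (t + α * (1 + vmin) * vmin) := by rw [ht]
          _ = t ^ (m + 2) + α * (1 + vmin) * vmin * t ^ (m + 1) := by ring
      have hP := hsq ((1 + s) / 2) (by linear_combination hs2 / 4) n
      have hQ := hsq ((1 - s) / 2) (by linear_combination hs2 / 4) n
      show accountX α X0 (vstar vmin vmax) (n + 4) = _
      rw [hrec, ih.1, ih.2, show n + 1 + 2 = n + 3 from rfl, hP, hQ]
      ring
  intro k hk
  obtain ⟨n, rfl⟩ : ∃ n, k = n + 2 := ⟨k - 2, by omega⟩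
  exact (key n).1
end

section
/- Suppose α = α_s := 1/(4|v_min|(1+v_min)). Then for every k ≥ 2, X(v*,k) = 2^{-k}·X_0·((1 − v_max + 2v_min)·k + 1 + v_max)/(1 + v_min). -/
/-- Closed form for `X(v*,k)` in the singular case `α = α_s = 1/(4|v_min|(1+v_min))`:
for `k ≥ 2`, `X(v*,k) = 2^{-k} X0 ((1 − v_max + 2 v_min) k + 1 + v_max)/(1 + v_min)`. -/
theorem closed_form_singular (vmin vmax α X0 : ℝ)
    (h1 : -1 < vmin) (h2 : vmin < 0) (h3 : 0 < vmax) (hX0 : 0 < X0)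
    (hα : α = 1 / (4 * |vmin| * (1 + vmin))) :
    ∀ k ≥ 2,
      accountX α X0 (vstar vmin vmax) k =
        (2 : ℝ) ^ (-(k : ℤ)) * X0 * ((1 - vmax + 2 * vmin) * k + 1 + vmax) / (1 + vmin) := by
  have hne : (1 + vmin) ≠ 0 := by linarith
  have hv0 : vmin ≠ 0 := ne_of_lt h2
  have habs : |vmin| = -vmin := abs_of_neg h2
  have hkey : α * (1 + vmin) * vmin = -(1/4) := by
    rw [hα, habs]; field_simp
  set c := 1 - vmax + 2 * vmin with hc
  set d := 1 + vmax with hd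
  have P : ∀ k : ℕ, ℝ → Prop := fun k x =>
    x = (2 : ℝ) ^ (-(k : ℤ)) * X0 * (c * k + d) / (1 + vmin)
  -- simplify zpow
  have hzpow : ∀ k : ℕ, (2 : ℝ) ^ (-(k : ℤ)) = ((2:ℝ) ^ k)⁻¹ := by
    intro k; rw [zpow_neg, zpow_natCast]
  have h2' : accountX α X0 (vstar vmin vmax) 2 =
      (2 : ℝ) ^ (-(2 : ℤ)) * X0 * (c * 2 + d) / (1 + vmin) := by
    show accountX α X0 (vstar vmin vmax) 1
        + α * (1 + vstar vmin vmax 0) * vstar vmin vmax 1 * accountX α X0 (vstar vmin vmax) 0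
        = _
    simp only [accountX, vstar, if_pos rfl, if_neg one_ne_zero, ↓reduceIte]
    rw [hα, habs, hc, hd]
    field_simp
    ring
  have h3' : accountX α X0 (vstar vmin vmax) 3 =
      (2 : ℝ) ^ (-(3 : ℤ)) * X0 * (c * 3 + d) / (1 + vmin) := by
    show accountX α X0 (vstar vmin vmax) 2
        + α * (1 + vstar vmin vmax 1) * vstar vmin vmax 2 * accountX α X0 (vstar vmin vmax) 1
        = _
    rw [h2']
    simp only [accountX, vstar, if_neg one_ne_zero, if_neg (by norm_num : (2:ℕ) ≠ 0)]
    rw [mul_comm (α * (1 + vmin)) vmin] at hkey ⊢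
    rw [show vmin * (α * (1 + vmin)) * X0 = (vmin * (α * (1 + vmin))) * X0 from rfl]
    rw [hkey, hc, hd]
    norm_num
    field_simp
    ring
  have main : ∀ n : ℕ,
      accountX α X0 (vstar vmin vmax) (n + 2) =
        (2 : ℝ) ^ (-((n + 2 : ℕ) : ℤ)) * X0 * (c * ((n + 2 : ℕ) : ℝ) + d) / (1 + vmin) ∧
      accountX α X0 (vstar vmin vmax) (n + 3) =
        (2 : ℝ) ^ (-((n + 3 : ℕ) : ℤ)) * X0 * (c * ((n + 3 : ℕ) : ℝ) + d) / (1 + vmin) := by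
    intro n
    induction n with
    | zero => exact ⟨by norm_num [h2'], by norm_num [h3']⟩
    | succ m ih =>
      obtain ⟨ihm, ihm1⟩ := ih
      refine ⟨by convert ihm1 using 3 <;> push_cast <;> ring, ?_⟩
      show accountX α X0 (vstar vmin vmax) (m + 3)
          + α * (1 + vstar vmin vmax (m + 2)) * vstar vmin vmax (m + 3)
            * accountX α X0 (vstar vmin vmax) (m + 2) = _
    -- vstar at positive indices
      have hv2 : vstar vmin vmax (m + 2) = vmin := by simp [vstar]
      have hv3 : vstar vmin vmax (m + 3) = vmin := by simp [vstar]
      rw [hv2, hv3, ihm, ihm1, hzpow, hzpow, hzpow]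
      rw [show α * (1 + vmin) * vmin = -(1/4) from hkey]
      have hp : (2:ℝ) ^ (m + 2) ≠ 0 := by positivity
      push_cast
      field_simp
      ring
  intro k hk
  obtain ⟨n, rfl⟩ : ∃ n, k = n + 2 := ⟨k - 2, by omega⟩
  rw [(main n).1, hd]; ring
end

section
/- If α > α_s := 1/(4|v_min|(1+v_min)), then there exists a stage k such that X(v*,k) < 0. -/
/-- Lemma 2(a): if `α > α_s = 1/(4|v_min|(1+v_min))`, then `X(v*,k)` is negative
for some stage `k`. -/
theorem distinguished_path_negative_oscillatory (vmin vmax α X0 : ℝ)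
    (h1 : -1 < vmin) (h2 : vmin < 0) (h3 : 0 < vmax) (hX0 : 0 < X0)
    (hα : α > 1 / (4 * |vmin| * (1 + vmin))) :
    ∃ k, accountX α X0 (vstar vmin vmax) k < 0 := by
  by_contra hcon
  push_neg at hcon
  set X := accountX α X0 (vstar vmin vmax) with hX
  set c : ℝ := α * (1 + vmin) * (-vmin) with hcdef
  have hvm : |vmin| = -vmin := abs_of_neg h2
  have hc4 : 1/4 < c := by
    rw [hvm] at hα
    have hpos : 0 < 4 * -vmin * (1 + vmin) := by nlinarith
    rw [gt_iff_lt, div_lt_iff₀ hpos] at hα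
    nlinarith
  have hrec : ∀ k, 1 ≤ k → X (k+2) = X (k+1) - c * X k := by
    intro k hk
    have hv1 : vstar vmin vmax k = vmin := by
      simp [vstar, Nat.one_le_iff_ne_zero.mp hk]
    have hv2 : vstar vmin vmax (k+1) = vmin := by simp [vstar]
    have : X (k+2) = X (k+1) + α * (1 + vstar vmin vmax k) *
        vstar vmin vmax (k+1) * X k := rfl
    rw [this, hv1, hv2, hcdef]; ring
  have hX1 : X 1 = X0 := rfl
  have hpos : ∀ k, 0 < X (k+1) := by
    intro k
    induction k using Nat.strong_induction_on with
    | _ k ih =>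
      match k with
      | 0 => simpa [hX1] using hX0
      | 1 =>
        rcases lt_or_eq_of_le (hcon 2) with h | h
        · exact h
        · exfalso
          have h3' := hrec 1 le_rfl
          have h4 := hcon 3
          rw [h3', ← h, hX1] at h4
          nlinarith
      | (n+2) =>
        rcases lt_or_eq_of_le (hcon (n+3)) with h | h
        · exact h
        · exfalso
          have h4 := hrec (n+2) (by omega)
          have hprev := ih (n+1) (by omega)
          have h5 := hcon (n+4)
          rw [h4, ← h] at h5
          nlinarith
  set y : ℕ → ℝ := fun k => X (k+2) / X (k+1) with hy
  have hypos : ∀ k, 0 < y k := fun k => div_pos (hpos (k+1)) (hpos k)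
  have hyrec : ∀ k, y (k+1) = 1 - c / y k := by
    intro k
    have hr := hrec (k+1) (by omega)
    have h1' := (hpos k).ne'
    have h2' := (hpos (k+1)).ne'
    have h3' := (hypos k).ne'
    simp only [hy]
    field_simp
    rw [hr]
  have hδ : (0:ℝ) < c - 1/4 := by linarith
  have hyle : ∀ k, y (k+1) ≤ 1 := by
    intro k
    have := div_pos (by linarith : (0:ℝ) < c) (hypos k)
    rw [hyrec k]; linarith
  have hdec : ∀ k, y (k+1) ≤ 1 → y (k+2) ≤ y (k+1) - (c - 1/4) := by
    intro k hk1
    have hyk := hypos (k+1)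
    have hcy : c / y (k+1) * y (k+1) = c := div_mul_cancel₀ c hyk.ne'
    have hr := hyrec (k+1)
    nlinarith [sq_nonneg (y (k+1) - 1/2)]
  have hbound : ∀ n, y (n+1) ≤ 1 - n * (c - 1/4) := by
    intro n
    induction n with
    | zero => simpa using hyle 0
    | succ m ihm =>
      have := hdec m (le_trans ihm (by nlinarith [Nat.cast_nonneg (α := ℝ) m]))
      push_cast
      push_cast at ihm
      linarith
  obtain ⟨n, hn⟩ := exists_nat_gt (1 / (c - 1/4))
  have h1n : 1 < n * (c - 1/4) := by
    rw [div_lt_iff₀ hδ] at hn; linarith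
  have := hbound n
  have := hypos (n+1)
  linarith
end

section
/- Suppose v_max > 1+2v_min and α* < α ≤ α_s, where α* := (v_max − v_min)/(|v_min|(1+v_max)²) and α_s := 1/(4|v_min|(1+v_min)). Then there exists K such that X(v*,k) < 0 for all k ≥ K. -/
set_option maxHeartbeats 1000000 in
/-- Lemma 2(b): if `v_max > 1 + 2 v_min` and `α* < α ≤ α_s`, then `X(v*,k)` is
negative for all sufficiently large `k`. -/
theorem distinguished_path_eventually_negative (vmin vmax α X0 : ℝ)
    (h1 : -1 < vmin) (h2 : vmin < 0) (h3 : 0 < vmax) (hX0 : 0 < X0)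
    (hgap : vmax > 1 + 2 * vmin)
    (hαlo : (vmax - vmin) / (|vmin| * (1 + vmax) ^ 2) < α)
    (hαhi : α ≤ 1 / (4 * |vmin| * (1 + vmin))) :
    ∃ K, ∀ k ≥ K, accountX α X0 (vstar vmin vmax) k < 0 := by
  have habs : |vmin| = -vmin := abs_of_neg h2
  rw [habs] at hαlo hαhi
  set X : ℕ → ℝ := accountX α X0 (vstar vmin vmax) with hXdef
  have hm : (0:ℝ) < -vmin := by linarith
  have h1v : (0:ℝ) < 1 + vmin := by linarith
  have h1V : (0:ℝ) < 1 + vmax := by linarith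
  have hα0 : 0 < α := by
    have : 0 < (vmax - vmin) / ((-vmin) * (1 + vmax) ^ 2) :=
      div_pos (by linarith) (by positivity)
    linarith
  obtain ⟨c, hcdef⟩ : ∃ c : ℝ, c = α * (-vmin) * (1 + vmin) := ⟨_, rfl⟩
  have hc0 : 0 < c := by rw [hcdef]; positivity
  have hc4 : c ≤ 1/4 := by
    have hd : (0:ℝ) < 4 * (-vmin) * (1 + vmin) := by positivity
    have h := (le_div_iff₀ hd).mp hαhi
    rw [hcdef]; nlinarith [h]
  obtain ⟨s, hsdef⟩ : ∃ s : ℝ, s = Real.sqrt (1 - 4 * c) := ⟨_, rfl⟩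
  have hs2 : s ^ 2 = 1 - 4 * c := by rw [hsdef]; exact Real.sq_sqrt (by linarith)
  have hs0 : 0 ≤ s := hsdef ▸ Real.sqrt_nonneg _
  have hs1 : s < 1 := by nlinarith [hs2, hs0, hc0]
  obtain ⟨rm, hrmdef⟩ : ∃ rm : ℝ, rm = (1 - s) / 2 := ⟨_, rfl⟩
  obtain ⟨rp, hrpdef⟩ : ∃ rp : ℝ, rp = (1 + s) / 2 := ⟨_, rfl⟩
  have hrm0 : 0 < rm := by rw [hrmdef]; linarith
  have hrp0 : 0 < rp := by rw [hrpdef]; linarith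
  have hrmrp : rm ≤ rp := by rw [hrmdef, hrpdef]; linarith
  have hsum : rm + rp = 1 := by rw [hrmdef, hrpdef]; ring
  have hprod : rm * rp = c := by
    rw [hrmdef, hrpdef, show (1 - s)/2 * ((1 + s)/2) = (1 - s^2)/4 from by ring, hs2]
    ring
  have hkey : vmax - vmin < α * ((-vmin) * (1 + vmax) ^ 2) :=
    (div_lt_iff₀ (by positivity)).mp hαlo
  obtain ⟨a, hadef⟩ : ∃ a : ℝ, a = α * (-vmin) * (1 + vmax) := ⟨_, rfl⟩
  have ha' : (1 + vmax) / 2 < a * (1 + vmax) := by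
    have e : a * (1 + vmax) = α * ((-vmin) * (1 + vmax) ^ 2) := by rw [hadef]; ring
    rw [e]; linarith
  have ha : 1/2 < a := by nlinarith [ha', h1V]
  have hqpos : 0 < a ^ 2 - a + c := by
    have e2 : a ^ 2 - a + c
        = (α * (-vmin)) * (α * ((-vmin) * (1 + vmax) ^ 2) - (vmax - vmin)) := by
      rw [hadef, hcdef]; ring
    rw [e2]
    exact mul_pos (mul_pos hα0 hm) (by linarith)
  have hslt : s < 2 * a - 1 := by nlinarith [hs2, hs0, ha, hqpos]
  have hrm : 1 - a < rm := by rw [hrmdef]; linarith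
  -- recurrence
  have hrec : ∀ n : ℕ, X (n + 3) = X (n + 2) - c * X (n + 1) := by
    intro n
    have e : X (n + 3) = X (n + 2) + α * (1 + vstar vmin vmax (n + 1)) *
        vstar vmin vmax (n + 2) * X (n + 1) := rfl
    have v1 : vstar vmin vmax (n + 1) = vmin := by simp [vstar]
    have v2 : vstar vmin vmax (n + 2) = vmin := by simp [vstar]
    rw [e, v1, v2, hcdef]; ring
  obtain ⟨Z1, hZ1def⟩ : ∃ Z1 : ℝ, Z1 = X 2 - rm * X 1 := ⟨_, rfl⟩
  have hZform : ∀ n : ℕ, X (n + 2) = rm * X (n + 1) + rp ^ n * Z1 := by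
    intro n
    induction n with
    | zero => rw [hZ1def]; ring
    | succ n ih =>
      rw [show n + 1 + 2 = n + 3 from rfl, hrec n, ih]
      linear_combination (X (n+1)) * hprod + (-(rm * X (n+1) + rp ^ n * Z1)) * hsum
  have hX1 : X 1 = X0 := rfl
  have hX2 : X 2 = X0 - a * X0 := by
    have e : X 2 = X 1 + α * (1 + vstar vmin vmax 0) * vstar vmin vmax 1 * X 0 := rfl
    rw [e]
    simp only [vstar, if_pos rfl, if_neg (by omega : ¬ (1:ℕ) = 0)]
    show X0 + α * (1 + vmax) * vmin * X0 = X0 - a * X0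
    rw [hadef]; ring
  have hZ1 : Z1 < 0 := by
    rw [hZ1def, hX1, hX2]
    have h5 : 0 < (a + rm - 1) * X0 := mul_pos (by linarith) hX0
    have h6 : (a + rm - 1) * X0 = a * X0 + rm * X0 - X0 := by ring
    linarith
  -- there is some nonpositive value
  have hneg : ∃ j : ℕ, X (j + 1) ≤ 0 := by
    by_contra hpos
    push_neg at hpos
    obtain ⟨u, hudef⟩ : ∃ u : ℕ → ℝ, u = fun n => X (n + 1) / rp ^ n := ⟨_, rfl⟩
    have hupos : ∀ n, 0 < u n := by
      intro n; rw [hudef]; exact div_pos (hpos n) (pow_pos hrp0 n)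
    have hu : ∀ n, u (n + 1) ≤ u n + Z1 / rp := by
      intro n
      have hun : 0 < u n := hupos n
      have hcalc : u (n + 1) = (rm / rp) * u n + Z1 / rp := by
        rw [hudef]
        simp only
        rw [hZform n]
        have hne : (rp : ℝ) ≠ 0 := ne_of_gt hrp0
        have hne2 : (rp : ℝ) ^ n ≠ 0 := pow_ne_zero _ hne
        field_simp
        ring
      have hle : rm / rp ≤ 1 := (div_le_one hrp0).mpr hrmrp
      have := mul_le_mul_of_nonneg_right hle hun.le
      rw [hcalc]; nlinarith [this]
    have hlin : ∀ n : ℕ, u n ≤ u 0 + n * (Z1 / rp) := by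
      intro n
      induction n with
      | zero => simp
      | succ n ih =>
        have := hu n
        push_cast
        push_cast at ih
        linarith
    have hd : 0 < -(Z1 / rp) := by
      have : Z1 / rp < 0 := div_neg_of_neg_of_pos hZ1 hrp0
      linarith
    obtain ⟨n, hn⟩ := exists_nat_gt (u 0 / (-(Z1 / rp)))
    have h2' : u 0 < n * (-(Z1 / rp)) := (div_lt_iff₀ hd).mp hn
    have h3' : 0 < u n := hupos n
    have h4' := hlin n
    nlinarith [h2', h3', h4']
  obtain ⟨j, hj⟩ := hneg
  have hnext : ∀ n : ℕ, X (n + 1) ≤ 0 → X (n + 2) < 0 := by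
    intro n h
    rw [hZform n]
    have ha1 : rm * X (n + 1) ≤ 0 := mul_nonpos_of_nonneg_of_nonpos hrm0.le h
    have ha2 : rp ^ n * Z1 < 0 := mul_neg_of_pos_of_neg (pow_pos hrp0 n) hZ1
    linarith
  have hall : ∀ n : ℕ, X (j + 2 + n) < 0 := by
    intro n
    induction n with
    | zero => exact hnext j hj
    | succ n ih =>
      have h' : X (j + 1 + n + 1) ≤ 0 := by
        have e : j + 1 + n + 1 = j + 2 + n := by omega
        rw [e]; exact ih.le
      have := hnext (j + 1 + n) h'
      have e : j + 1 + n + 2 = j + 2 + (n + 1) := by omega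
      rw [e] at this; exact this
  refine ⟨j + 2, fun k hk => ?_⟩
  obtain ⟨n, rfl⟩ := Nat.exists_eq_add_of_le hk
  exact hall n
end

section
/- Suppose v_max < 1+2v_min and α* < α ≤ α_s, where α* := (v_max − v_min)/(|v_min|(1+v_max)²) and α_s := 1/(4|v_min|(1+v_min)). Then X(v*,k) > 0 for all k ≥ 0. -/
/-- Lemma 2(c): if `v_max < 1 + 2 v_min` and `α* < α ≤ α_s`, then `X(v*,k)` is
positive for all `k ≥ 0`. -/
theorem distinguished_path_positive_case_c (vmin vmax α X0 : ℝ)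
    (h1 : -1 < vmin) (h2 : vmin < 0) (h3 : 0 < vmax) (hX0 : 0 < X0)
    (hgap : vmax < 1 + 2 * vmin)
    (hαlo : (vmax - vmin) / (|vmin| * (1 + vmax) ^ 2) < α)
    (hαhi : α ≤ 1 / (4 * |vmin| * (1 + vmin))) :
    ∀ k, 0 < accountX α X0 (vstar vmin vmax) k := by
  have hv : |vmin| = -vmin := abs_of_neg h2
  rw [hv] at hαlo hαhi
  have hnv : 0 < -vmin := neg_pos.mpr h2
  have h1v : 0 < 1 + vmin := by linarith
  have hαpos : 0 < α := by
    refine lt_trans ?_ hαlo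
    apply div_pos (by linarith) (by positivity)
  have hβ : α * (-vmin) * (1 + vmin) ≤ 1 / 4 := by
    rw [le_div_iff₀ (by positivity)] at hαhi
    nlinarith
  have hbase : α * (-vmin) * (1 + vmax) < 1 / 2 := by
    nlinarith [mul_pos hαpos hnv]
  set X := accountX α X0 (vstar vmin vmax) with hX
  have key : ∀ n, 0 < X (n + 1) ∧ X (n + 1) / 2 < X (n + 2) := by
    intro n
    induction n with
    | zero =>
      have e1 : X 1 = X0 := rfl
      have e2 : X 2 = X0 + α * (1 + vmax) * vmin * X0 := by
        show accountX α X0 (vstar vmin vmax) 2 = _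
        simp [accountX, vstar]
      constructor
      · rw [e1]; exact hX0
      · rw [e1, e2]; nlinarith
    | succ n ih =>
      obtain ⟨hp, hq⟩ := ih
      have hpos2 : 0 < X (n + 2) := by linarith
      have hrec : X (n + 3) = X (n + 2) + α * (1 + vmin) * vmin * X (n + 1) := by
        show accountX α X0 (vstar vmin vmax) (n + 1 + 2) = _
        rw [accountX]
        simp [vstar]
        rfl
      constructor
      · exact hpos2
      · rw [hrec]; nlinarith
  intro k
  cases k with
  | zero => exact hX0
  | succ n => exact (key n).1
end

section
/- If 0 ≤ α ≤ α* := (v_max − v_min)/(|v_min|(1+v_max)²), then X(v*,k) > 0 for all k ≥ 0. -/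
/-- Lemma 2(d): if `0 ≤ α ≤ α* = (v_max − v_min)/(|v_min|(1+v_max)²)`, then
`X(v*,k)` is positive for all `k ≥ 0`. -/
theorem distinguished_path_positive_case_d (vmin vmax α X0 : ℝ)
    (h1 : -1 < vmin) (h2 : vmin < 0) (h3 : 0 < vmax) (hX0 : 0 < X0)
    (hα0 : 0 ≤ α) (hα : α ≤ (vmax - vmin) / (|vmin| * (1 + vmax) ^ 2)) :
    ∀ k, 0 < accountX α X0 (vstar vmin vmax) k := by
  have hA : (0:ℝ) < 1 + vmin := by linarith
  have hB : (0:ℝ) < 1 + vmax := by linarith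
  have habs : |vmin| = -vmin := abs_of_neg h2
  have hden : 0 < |vmin| * (1 + vmax) ^ 2 := by
    rw [habs]; exact mul_pos (by linarith) (by positivity)
  have hα' : α * (-vmin * (1 + vmax) ^ 2) ≤ vmax - vmin := by
    have h := (le_div_iff₀ hden).mp hα
    rw [habs] at h
    linarith
  set X := accountX α X0 (vstar vmin vmax) with hXdef
  have step2 : ∀ k : ℕ, X (k + 3) = X (k + 2) + α * (1 + vmin) * vmin * X (k + 1) := by
    intro k
    simp [hXdef, accountX, vstar]
  have step1 : X 2 = X 1 + α * (1 + vmax) * vmin * X 0 := by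
    simp [hXdef, accountX, vstar]
  have e0 : X 0 = X0 := by simp [hXdef, accountX]
  have e1 : X 1 = X0 := by simp [hXdef, accountX]
  have H : ∀ k : ℕ, 0 < X (k + 1) ∧ (1 + vmin) * X (k + 1) ≤ (1 + vmax) * X (k + 2) := by
    intro k
    induction k with
    | zero =>
      constructor
      · rw [e1]; exact hX0
      · rw [step1, e1, e0]
        nlinarith [mul_le_mul_of_nonneg_right hα' hX0.le]
    | succ n ih =>
      obtain ⟨hp, hr⟩ := ih
      have hp2 : 0 < X (n + 2) := by nlinarith [mul_pos hA hp]
      refine ⟨hp2, ?_⟩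
      rw [step2]
      have k1 := mul_le_mul_of_nonneg_left hα' (mul_pos hA hp).le
      have k2 := mul_le_mul_of_nonneg_left hr (by linarith : (0:ℝ) ≤ vmax - vmin)
      nlinarith [k1, k2, hB, hp]
  intro k
  cases k with
  | zero => rw [e0]; exact hX0
  | succ n => exact (H n).1
end

section
/- If 0 < α ≤ α_s := 1/(4|v_min|(1+v_min)), then X(v*,k) → 0 as k → ∞. -/
open Filter

/-- If `0 < α ≤ α_s = 1/(4|v_min|(1+v_min))`, then `X(v*,k) → 0` as `k → ∞`. -/
theorem distinguished_path_tendsto_zero (vmin vmax α X0 : ℝ)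
    (h1 : -1 < vmin) (h2 : vmin < 0) (h3 : 0 < vmax) (hX0 : 0 < X0)
    (hα0 : 0 < α) (hα : α ≤ 1 / (4 * |vmin| * (1 + vmin))) :
    Tendsto (fun k => accountX α X0 (vstar vmin vmax) k) atTop (nhds 0) := by
  set X : ℕ → ℝ := fun k => accountX α X0 (vstar vmin vmax) k with hX
  set c : ℝ := -(α * (1 + vmin) * vmin) with hc
  have habs : |vmin| = -vmin := abs_of_neg h2
  have h1' : 0 < 1 + vmin := by linarith
  have hc0 : 0 < c := by
    have : α * (1 + vmin) * vmin < 0 := mul_neg_of_pos_of_neg (by positivity) h2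
    linarith
  have hc4 : c ≤ 1 / 4 := by
    have hden : 0 < 4 * |vmin| * (1 + vmin) := by
      rw [habs]; nlinarith
    rw [habs] at hden
    have hα' : α ≤ 1 / (4 * -vmin * (1 + vmin)) := by rwa [habs] at hα
    have h6 := (le_div_iff₀ hden).mp hα'
    rw [hc]
    nlinarith
  -- key recurrence
  have hrec : ∀ k : ℕ, X (k + 3) = X (k + 2) - c * X (k + 1) := by
    intro k
    have : X (k + 3) = X (k + 2) + α * (1 + vstar vmin vmax (k + 1)) *
        vstar vmin vmax (k + 2) * X (k + 1) := rfl
    rw [this]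
    simp only [vstar]
    norm_num
    ring
  -- roots
  set d : ℝ := Real.sqrt (1 - 4 * c) with hd
  have hd0 : 0 ≤ d := Real.sqrt_nonneg _
  have hd1 : d < 1 := by
    rw [hd]
    have : (1 : ℝ) = Real.sqrt 1 := (Real.sqrt_one).symm
    rw [this]
    exact Real.sqrt_lt_sqrt (by linarith) (by linarith)
  have hdsq : d ^ 2 = 1 - 4 * c := Real.sq_sqrt (by linarith)
  set r : ℝ := (1 + d) / 2 with hr
  set s : ℝ := (1 - d) / 2 with hs
  have hr0 : 0 < r := by rw [hr]; linarith
  have hr1 : r < 1 := by rw [hr]; linarith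
  have hs0 : 0 ≤ s := by rw [hs]; linarith
  have hsr : s ≤ r := by rw [hs, hr]; linarith
  have hrs : r * s = c := by rw [hr, hs]; nlinarith [hdsq]
  have hsum : r + s = 1 := by rw [hr, hs]; ring
  -- Z k := X (k+2) - r * X (k+1) satisfies Z (k+1) = s * Z k
  set Z : ℕ → ℝ := fun k => X (k + 2) - r * X (k + 1) with hZ
  have hZrec : ∀ k, Z (k + 1) = s * Z k := by
    intro k
    simp only [hZ]
    have := hrec k
    have h1r : 1 - r = s := by linarith
    calc X (k + 3) - r * X (k + 2) = (1 - r) * X (k + 2) - c * X (k + 1) := by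
          rw [this]; ring
      _ = s * (X (k + 2) - r * X (k + 1)) := by rw [h1r, ← hrs]; ring
  have hZk : ∀ k, Z k = Z 0 * s ^ k := by
    intro k
    induction k with
    | zero => simp
    | succ n ih => rw [hZrec n, ih]; ring
  -- u k := X (k+1); u (k+1) = r * u k + Z 0 * s ^ k
  -- bound: |X (k+1)| ≤ (|X 1| + k * |Z 0| / r) * r ^ k
  have hbound : ∀ k, |X (k + 1)| ≤ (|X 1| + k * |Z 0| / r) * r ^ k := by
    intro k
    induction k with
    | zero => simp
    | succ n ih =>
      have hZn : X (n + 2) - r * X (n + 1) = Z 0 * s ^ n := hZk n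
      have hXn : X (n + 2) = r * X (n + 1) + Z 0 * s ^ n := by linarith
      rw [hXn]
      have h1 : |r * X (n + 1) + Z 0 * s ^ n| ≤ r * |X (n + 1)| + |Z 0| * s ^ n := by
        calc |r * X (n + 1) + Z 0 * s ^ n| ≤ |r * X (n + 1)| + |Z 0 * s ^ n| := abs_add_le _ _
          _ = r * |X (n + 1)| + |Z 0| * s ^ n := by
              rw [abs_mul, abs_mul, abs_of_pos hr0, abs_of_nonneg (pow_nonneg hs0 n)]
      have h2 : s ^ n ≤ r ^ n := pow_le_pow_left₀ hs0 hsr n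
      have h3 : r * |X (n + 1)| ≤ r * ((|X 1| + n * |Z 0| / r) * r ^ n) :=
        mul_le_mul_of_nonneg_left ih hr0.le
      have h4 : |Z 0| * s ^ n ≤ |Z 0| * r ^ n :=
        mul_le_mul_of_nonneg_left h2 (abs_nonneg _)
      have h5 : r * ((|X 1| + n * |Z 0| / r) * r ^ n) + |Z 0| * r ^ n
          = (|X 1| + (n + 1) * |Z 0| / r) * r ^ (n + 1) := by
        field_simp
        ring
      push_cast
      push_cast at h5
      linarith
  -- the bound tends to 0
  have htb : Tendsto (fun k : ℕ => (|X 1| + k * |Z 0| / r) * r ^ k) atTop (nhds 0) := by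
    have t1 : Tendsto (fun k : ℕ => |X 1| * r ^ k) atTop (nhds 0) := by
      simpa using (tendsto_pow_atTop_nhds_zero_of_lt_one hr0.le hr1).const_mul (|X 1|)
    have t2 : Tendsto (fun k : ℕ => (k * r ^ k) * (|Z 0| / r)) atTop (nhds 0) := by
      simpa using (tendsto_self_mul_const_pow_of_lt_one hr0.le hr1).mul_const (|Z 0| / r)
    have := t1.add t2
    simp only [add_zero] at this
    convert this using 2 with k
    ring
  have hXten : Tendsto (fun k : ℕ => X (k + 1)) atTop (nhds 0) := by
    apply squeeze_zero_norm _ htb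
    intro k
    simpa using hbound k
  exact (tendsto_add_atTop_iff_nat 1).mp hXten
end

section
/- If 0 ≤ α < 1/(|v_min|(2+v_max+v_min)), then X(v,k) > 0 for all k ≤ 3 and all paths v with v_min ≤ v(j) ≤ v_max for j = 0, 1, 2. -/
/-- If `0 ≤ α < 1/(|v_min|(2+v_max+v_min))`, then `X(v,k) > 0` for all `k ≤ 3`
and all paths `v` with `v_min ≤ v(j) ≤ v_max` for `j = 0, 1, 2`. -/
theorem positivity_up_to_three (vmin vmax α X0 : ℝ)
    (h1 : -1 < vmin) (h2 : vmin < 0) (h3 : 0 < vmax) (hX0 : 0 < X0)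
    (hα0 : 0 ≤ α) (hα : α < 1 / (|vmin| * (2 + vmax + vmin))) :
    ∀ v : ℕ → ℝ, (∀ j < 3, vmin ≤ v j ∧ v j ≤ vmax) →
      ∀ k ≤ 3, 0 < accountX α X0 v k := by
  intro v hv k hk
  obtain ⟨h01, h02⟩ := hv 0 (by norm_num)
  obtain ⟨h11, h12⟩ := hv 1 (by norm_num)
  obtain ⟨h21, h22⟩ := hv 2 (by norm_num)
  have habs : |vmin| = -vmin := abs_of_neg h2
  rw [habs] at hα
  have hden : 0 < -vmin * (2 + vmax + vmin) := by nlinarith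
  have hα' : α * (-vmin * (2 + vmax + vmin)) < 1 := by
    rw [lt_div_iff₀ hden] at hα; linarith
  -- bound for the single product term
  have key2 : vmin * (2 + vmax + vmin) ≤ (1 + v 0) * v 1 := by
    nlinarith [mul_nonneg (by linarith : (0:ℝ) ≤ 1 + v 0) (sub_nonneg.2 h11),
      mul_nonneg (by linarith : (0:ℝ) ≤ -vmin) (sub_nonneg.2 h02)]
  -- bound for the sum of two product terms
  have key3 : vmin * (2 + vmax + vmin) ≤ (1 + v 0) * v 1 + (1 + v 1) * v 2 := by
    have hc : (0:ℝ) ≤ (1 + v 1) * (v 2 - vmin) :=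
      mul_nonneg (by linarith) (by linarith)
    rcases le_or_gt 0 (1 + v 0 + vmin) with hs | hs
    · nlinarith [mul_nonneg (sub_nonneg.2 h11) hs,
        mul_nonneg (by linarith : (0:ℝ) ≤ -vmin) (sub_nonneg.2 h02)]
    · nlinarith [mul_nonneg (sub_nonneg.2 h12) (by linarith : (0:ℝ) ≤ -(1 + v 0 + vmin)),
        mul_nonneg (sub_nonneg.2 h01) h3.le]
  have hα2 : α * (vmin * (2 + vmax + vmin)) ≤ α * ((1 + v 0) * v 1) :=
    mul_le_mul_of_nonneg_left key2 hα0
  have hα3 : α * (vmin * (2 + vmax + vmin)) ≤ α * ((1 + v 0) * v 1 + (1 + v 1) * v 2) :=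
    mul_le_mul_of_nonneg_left key3 hα0
  have hlow : -1 < α * (vmin * (2 + vmax + vmin)) := by nlinarith
  interval_cases k <;> simp only [accountX]
  · exact hX0
  · exact hX0
  · nlinarith [mul_pos hX0 (by linarith : (0:ℝ) < 1 + α * ((1 + v 0) * v 1))]
  · nlinarith [mul_pos hX0 (by linarith : (0:ℝ) < 1 + α * ((1 + v 0) * v 1 + (1 + v 1) * v 2))]
end

section
/- Let α ≥ 0. Then X(v,2) > 0 for all admissible paths v if and only if α < 1/(|v_min|(1+v_max)). -/
/-- For `α ≥ 0`: `X(v,2) > 0` for all admissible paths `v` if and only if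
`α < 1/(|v_min|(1+v_max))`. -/
theorem positivity_at_two_iff (vmin vmax α X0 : ℝ)
    (h1 : -1 < vmin) (h2 : vmin < 0) (h3 : 0 < vmax) (hX0 : 0 < X0)
    (hα0 : 0 ≤ α) :
    (∀ v : ℕ → ℝ, (∀ k, vmin ≤ v k ∧ v k ≤ vmax) → 0 < accountX α X0 v 2) ↔
      α < 1 / (|vmin| * (1 + vmax)) := by
  have habs : |vmin| = -vmin := abs_of_neg h2
  have hden : 0 < |vmin| * (1 + vmax) := by
    rw [habs]; nlinarith
  rw [lt_div_iff₀ hden]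
  constructor
  · intro h
    have := h (fun k => if k = 0 then vmax else vmin) (by
      intro k
      by_cases hk : k = 0 <;> simp [hk] <;> linarith)
    simp only [accountX] at this
    norm_num at this
    rw [habs]
    nlinarith
  · intro h v hv
    simp only [accountX]
    norm_num
    obtain ⟨h0l, h0u⟩ := hv 0
    obtain ⟨h1l, h1u⟩ := hv 1
    rw [habs] at h
    have hp : 0 < 1 + v 0 := by linarith
    rcases le_or_gt 0 (v 1) with hs | hs
    · nlinarith [mul_nonneg (mul_nonneg (mul_nonneg hα0 hp.le) hs) hX0.le]
    · have e1 : (1 + vmax) * v 1 ≤ (1 + v 0) * v 1 := by nlinarith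
      have e2 : (1 + vmax) * vmin ≤ (1 + vmax) * v 1 := by nlinarith
      have e3 : α * ((1 + vmax) * vmin) ≤ α * ((1 + v 0) * v 1) :=
        mul_le_mul_of_nonneg_left (le_trans e2 e1) hα0
      have e4 : α * ((1 + vmax) * vmin) = -(α * (-vmin * (1 + vmax))) := by ring
      have e5 : 0 < 1 + α * ((1 + v 0) * v 1) := by linarith
      nlinarith [mul_pos hX0 e5]
end

section
/- Define α_+ := (v_max − v_min)/(|v_min|(1+v_max)²) if v_max > 1+2v_min, and α_+ := 1/(4|v_min|(1+v_min)) if v_max ≤ 1+2v_min. Then α_+ < 1/(|v_min|(2+v_max+v_min)). -/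
/-- The threshold `α_+` is smaller than `α_max(3) = 1/(|v_min|(2+v_max+v_min))`. -/
theorem alpha_plus_lt_alpha_max_three (vmin vmax : ℝ)
    (h1 : -1 < vmin) (h2 : vmin < 0) (h3 : 0 < vmax) :
    (if vmax > 1 + 2 * vmin then (vmax - vmin) / (|vmin| * (1 + vmax) ^ 2)
      else 1 / (4 * |vmin| * (1 + vmin))) <
      1 / (|vmin| * (2 + vmax + vmin)) := by
  rw [abs_of_neg h2]
  have hm : 0 < -vmin := by linarith
  have hd : 0 < -vmin * (2 + vmax + vmin) := by nlinarith
  split_ifs with h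
  · rw [div_lt_div_iff₀ (mul_pos hm (pow_pos (by linarith) 2)) hd]
    nlinarith [mul_pos hm (pow_pos (show (0:ℝ) < 1 + vmin by linarith) 2)]
  · rw [div_lt_div_iff₀ (by nlinarith) hd]
    push_neg at h
    nlinarith
end

section
/- Suppose α > α_s := 1/(4|v_min|(1+v_min)), so that θ := 4α v_min(1+v_min) + 1 < 0. Then there exist real constants B > 0, r > 0, and φ such that, with ω := arctan(√|θ|) ∈ (0, π/2), X(v*,k) = B·r^{k-1}·cos((k-1)ω + φ) for all k ≥ 2. -/
/-- Oscillatory closed form: if `α > α_s`, then `θ := 4 α v_min (1+v_min) + 1 < 0` and,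
with `ω := arctan √|θ| ∈ (0, π/2)`, there exist `B > 0`, `r > 0` and `φ` such that
`X(v*,k) = B r^{k-1} cos((k-1)ω + φ)` for all `k ≥ 2`. -/
theorem oscillatory_closed_form (vmin vmax α X0 : ℝ)
    (h1 : -1 < vmin) (h2 : vmin < 0) (h3 : 0 < vmax) (hX0 : 0 < X0)
    (hα : α > 1 / (4 * |vmin| * (1 + vmin))) :
    4 * α * vmin * (1 + vmin) + 1 < 0 ∧
    0 < Real.arctan (Real.sqrt |4 * α * vmin * (1 + vmin) + 1|) ∧
    Real.arctan (Real.sqrt |4 * α * vmin * (1 + vmin) + 1|) < Real.pi / 2 ∧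
    ∃ B > (0 : ℝ), ∃ r > (0 : ℝ), ∃ φ : ℝ, ∀ k ≥ 2,
      accountX α X0 (vstar vmin vmax) k =
        B * r ^ (k - 1) *
          Real.cos ((k - 1 : ℕ) * Real.arctan (Real.sqrt |4 * α * vmin * (1 + vmin) + 1|) + φ) := by
  have habs : |vmin| = -vmin := abs_of_neg h2
  have hden : 0 < 4 * |vmin| * (1 + vmin) := by rw [habs]; nlinarith
  have hθ : 4 * α * vmin * (1 + vmin) + 1 < 0 := by
    have h := (div_lt_iff₀ hden).mp hα
    rw [habs] at h; nlinarith
  set t := Real.sqrt |4 * α * vmin * (1 + vmin) + 1| with htdef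
  set ω := Real.arctan t with hωdef
  have ht2 : t ^ 2 = -(4 * α * vmin * (1 + vmin) + 1) := by
    rw [htdef, Real.sq_sqrt (abs_nonneg _), abs_of_neg hθ]
  have ht0 : 0 < t := Real.sqrt_pos.mpr (abs_pos.mpr (ne_of_lt hθ))
  refine ⟨hθ, (by rw [← Real.arctan_zero]; exact Real.arctan_strictMono ht0), Real.arctan_lt_pi_div_two t, ?_⟩
  -- constants
  set c : ℝ := α * vmin * (1 + vmin) with hcdef
  have ht2c : t ^ 2 = -(4 * c + 1) := by rw [ht2]; ring
  set r : ℝ := Real.sqrt (1 + t ^ 2) / 2 with hrdef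
  have hsq : 0 < Real.sqrt (1 + t ^ 2) := Real.sqrt_pos.mpr (by positivity)
  have hr : 0 < r := by positivity
  set X2 : ℝ := X0 + α * (1 + vmax) * vmin * X0 with hX2def
  set S : ℝ := (2 * X2 - X0) / t with hSdef
  set w : ℂ := (X0 : ℂ) - (S : ℂ) * Complex.I with hwdef
  have hwre : w.re = X0 := by simp [hwdef]
  have hw0 : w ≠ 0 := fun h => by simp [h] at hwre; exact hX0.ne' hwre.symm
  set B : ℝ := ‖w‖ with hBdef
  have hB : 0 < B := norm_pos_iff.mpr hw0
  set φ : ℝ := Complex.arg w with hφdef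
  set L : ℂ := (1 + (t : ℂ) * Complex.I) / 2 with hLdef
  have ht2' : (t : ℂ) ^ 2 = (-(4 * c + 1) : ℝ) := by exact_mod_cast congrArg Complex.ofReal ht2c
  have hL2 : L ^ 2 = L + (c : ℂ) := by
    rw [hLdef]
    push_cast at ht2' ⊢
    linear_combination ((t:ℂ)^2/4) * Complex.I_sq + (-(1:ℂ)/4) * ht2'
  have hpolar : L = (r : ℂ) * Complex.exp ((ω : ℂ) * Complex.I) := by
    have hre1 : ((r : ℂ) * Complex.exp ((ω : ℂ) * Complex.I)).re = r * Real.cos ω := by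
      rw [Complex.re_ofReal_mul, Complex.exp_ofReal_mul_I_re]
    have him1 : ((r : ℂ) * Complex.exp ((ω : ℂ) * Complex.I)).im = r * Real.sin ω := by
      rw [Complex.im_ofReal_mul, Complex.exp_ofReal_mul_I_im]
    apply Complex.ext
    · rw [hre1, hωdef, Real.cos_arctan, hrdef]
      have hLre : L.re = 1 / 2 := by simp [hLdef, Complex.div_re]
      rw [hLre]
      field_simp
    · rw [him1, hωdef, Real.sin_arctan, hrdef]
      have hLim : L.im = t / 2 := by simp [hLdef, Complex.div_im]
      rw [hLim]
      field_simp
  have key : ∀ n : ℕ, accountX α X0 (vstar vmin vmax) (n + 1) = (w * L ^ n).re ∧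
      accountX α X0 (vstar vmin vmax) (n + 2) = (w * L ^ (n + 1)).re := by
    intro n
    induction n with
    | zero =>
      constructor
      · show X0 = (w * 1).re
        rw [mul_one, hwre]
      · show accountX α X0 (vstar vmin vmax) 1 +
            α * (1 + vstar vmin vmax 0) * vstar vmin vmax 1 *
              accountX α X0 (vstar vmin vmax) 0 = (w * L ^ 1).re
        have hSt : S * t = 2 * X2 - X0 := by rw [hSdef]; field_simp
        have hre : (w * L ^ 1).re = (X0 + S * t) / 2 := by
          rw [pow_one, hwdef, hLdef]
          simp [Complex.div_re, Complex.add_re, Complex.mul_re]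
          ring
        rw [hre, hSt]
        show X0 + α * (1 + vstar vmin vmax 0) * vstar vmin vmax 1 * X0 = _
        have e0 : vstar vmin vmax 0 = vmax := by simp [vstar]
        have e1 : vstar vmin vmax 1 = vmin := by simp [vstar]
        rw [e0, e1, hX2def]; ring
    | succ n ih =>
      refine ⟨ih.2, ?_⟩
      have hrec : accountX α X0 (vstar vmin vmax) (n + 3) =
          accountX α X0 (vstar vmin vmax) (n + 2) +
            c * accountX α X0 (vstar vmin vmax) (n + 1) := by
        show accountX α X0 (vstar vmin vmax) (n + 2) +
            α * (1 + vstar vmin vmax (n + 1)) * vstar vmin vmax (n + 2) *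
              accountX α X0 (vstar vmin vmax) (n + 1) = _
        have e1 : vstar vmin vmax (n + 1) = vmin := by simp [vstar]
        have e2 : vstar vmin vmax (n + 2) = vmin := by simp [vstar]
        rw [e1, e2, hcdef]; ring
      have hLrec : w * L ^ (n + 2) = w * L ^ (n + 1) + (c : ℂ) * (w * L ^ n) := by
        have : L ^ (n + 2) = L ^ n * L ^ 2 := by ring
        rw [this, hL2]; ring
      rw [show n + 1 + 2 = n + 3 from rfl, hrec, ih.1, ih.2, show n + 1 + 1 = n + 2 from rfl,
        hLrec]
      simp [Complex.add_re, Complex.re_ofReal_mul]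
  have hre : ∀ n : ℕ, (w * L ^ n).re = B * r ^ n * Real.cos (n * ω + φ) := by
    intro n
    have hw' : w = (B : ℂ) * Complex.exp ((φ : ℂ) * Complex.I) :=
      (Complex.norm_mul_exp_arg_mul_I w).symm
    have hLn : L ^ n = ((r ^ n : ℝ) : ℂ) * Complex.exp (((n * ω : ℝ) : ℂ) * Complex.I) := by
      rw [hpolar, mul_pow, ← Complex.exp_nat_mul]
      push_cast
      ring_nf
    have hcomb : w * L ^ n = ((B * r ^ n : ℝ) : ℂ) *
        Complex.exp (((n * ω + φ : ℝ) : ℂ) * Complex.I) := by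
      rw [hw', hLn]
      push_cast
      rw [mul_mul_mul_comm, ← Complex.exp_add]
      ring_nf
    rw [hcomb, Complex.re_ofReal_mul, Complex.exp_ofReal_mul_I_re]
  refine ⟨B, hB, r, hr, φ, ?_⟩
  intro k hk
  obtain ⟨m, rfl⟩ : ∃ m, k = m + 2 := ⟨k - 2, by omega⟩
  have h := (key (m + 1)).1
  rw [show m + 1 + 1 = m + 2 from rfl] at h
  rw [h, hre (m + 1)]
  norm_num
end

section
/- Fix N ≥ 0 and k ≤ N. For every admissible partial path v ∈ V^N there exists an extreme path w ∈ V^N (i.e., a partial path with w(j) ∈ {v_min, v_max} for each j = 0,…,N−1) such that X(w,k) ≤ X(v,k). Consequently, X(v,k) > 0 for all v ∈ V^N and all k ≤ N if and only if X(w,k) > 0 for all extreme paths w and all k ≤ N. -/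
lemma accountX_congr (α X0 : ℝ) (v v' : ℕ → ℝ) :
    ∀ m, (∀ i < m, v i = v' i) → accountX α X0 v m = accountX α X0 v' m := by
  intro m
  induction m using Nat.strong_induction_on with
  | _ m ih =>
    match m with
    | 0 => intro _; simp [accountX]
    | 1 => intro _; simp [accountX]
    | (k + 2) =>
      intro h
      simp only [accountX]
      rw [ih (k + 1) (by omega) (fun i hi => h i (by omega)),
        ih k (by omega) (fun i hi => h i (by omega)),
        h k (by omega), h (k + 1) (by omega)]

lemma accountX_affine (α X0 : ℝ) (v : ℕ → ℝ) (j : ℕ) :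
    ∀ k, ∃ a b : ℝ, ∀ t, accountX α X0 (Function.update v j t) k = a + b * t := by
  intro k
  induction k using Nat.strong_induction_on with
  | _ k ih =>
    match k with
    | 0 => exact ⟨X0, 0, fun t => by simp [accountX]⟩
    | 1 => exact ⟨X0, 0, fun t => by simp [accountX]⟩
    | (k + 2) =>
      obtain ⟨a1, b1, h1⟩ := ih (k + 1) (by omega)
      obtain ⟨a0, b0, h0⟩ := ih k (by omega)
      by_cases hjk : j = k
      · subst hjk
        have hc : ∀ t, accountX α X0 (Function.update v j t) j = accountX α X0 v j :=
          fun t => accountX_congr _ _ _ _ _ (fun i hi => Function.update_of_ne (by omega) _ _)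
        refine ⟨a1 + α * v (j + 1) * accountX α X0 v j,
          b1 + α * v (j + 1) * accountX α X0 v j, fun t => ?_⟩
        simp only [accountX, h1, hc, Function.update_self,
          Function.update_of_ne (show j + 1 ≠ j by omega)]
        ring
      · by_cases hjk1 : j = k + 1
        · subst hjk1
          have hc1 : ∀ t, accountX α X0 (Function.update v (k+1) t) (k+1) = accountX α X0 v (k+1) :=
            fun t => accountX_congr _ _ _ _ _ (fun i hi => Function.update_of_ne (by omega) _ _)
          have hc0 : ∀ t, accountX α X0 (Function.update v (k+1) t) k = accountX α X0 v k :=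
            fun t => accountX_congr _ _ _ _ _ (fun i hi => Function.update_of_ne (by omega) _ _)
          refine ⟨accountX α X0 v (k + 1), α * (1 + v k) * accountX α X0 v k, fun t => ?_⟩
          simp only [accountX, hc1, hc0, Function.update_self,
            Function.update_of_ne (show k ≠ k + 1 by omega)]
          ring
        · refine ⟨a1 + α * (1 + v k) * v (k + 1) * a0,
            b1 + α * (1 + v k) * v (k + 1) * b0, fun t => ?_⟩
          simp only [accountX, h1, h0, Function.update_of_ne (show k ≠ j by omega),
            Function.update_of_ne (show k + 1 ≠ j by omega)]
          ring

lemma affine_endpoint (vmin vmax a b : ℝ) :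
    ∃ s, (s = vmin ∨ s = vmax) ∧ ∀ t, vmin ≤ t → t ≤ vmax → a + b * s ≤ a + b * t := by
  rcases le_or_gt 0 b with hb | hb
  · exact ⟨vmin, Or.inl rfl, fun t ht _ => by nlinarith⟩
  · exact ⟨vmax, Or.inr rfl, fun t _ ht => by nlinarith⟩

lemma reduce (vmin vmax α X0 : ℝ) (hmm : vmin ≤ vmax) (k : ℕ) :
    ∀ n, ∀ v : ℕ → ℝ, (∀ j, vmin ≤ v j ∧ v j ≤ vmax) →
      ∃ w : ℕ → ℝ, (∀ j, vmin ≤ w j ∧ w j ≤ vmax) ∧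
        (∀ j < n, w j = vmin ∨ w j = vmax) ∧
        accountX α X0 w k ≤ accountX α X0 v k := by
  intro n
  induction n with
  | zero => exact fun v hv => ⟨v, hv, fun j hj => absurd hj (by omega), le_refl _⟩
  | succ n ihn =>
    intro v hv
    obtain ⟨w, hwb, hwe, hwle⟩ := ihn v hv
    obtain ⟨a, b, hab⟩ := accountX_affine α X0 w n k
    obtain ⟨s, hs, hmin⟩ := affine_endpoint vmin vmax a b
    refine ⟨Function.update w n s, ?_, ?_, ?_⟩
    · intro j
      by_cases hj : j = n
      · subst hj
        simp only [Function.update_self]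
        rcases hs with h | h <;> rw [h]
        · exact ⟨le_refl _, hmm⟩
        · exact ⟨hmm, le_refl _⟩
      · simp only [Function.update_of_ne hj]; exact hwb j
    · intro j hj
      by_cases hje : j = n
      · subst hje; simp only [Function.update_self]; exact hs
      · simp only [Function.update_of_ne hje]; exact hwe j (by omega)
    · calc accountX α X0 (Function.update w n s) k = a + b * s := hab s
        _ ≤ a + b * (w n) := hmin (w n) (hwb n).1 (hwb n).2
        _ = accountX α X0 (Function.update w n (w n)) k := (hab (w n)).symm
        _ = accountX α X0 w k := by rw [Function.update_eq_self]
        _ ≤ accountX α X0 v k := hwle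

/-- Extreme-path reduction: for fixed `N` and `k ≤ N`, every admissible partial path
`v ∈ V^N` is dominated (from below, at stage `k`) by some extreme path `w`, i.e. one
with `w(j) ∈ {v_min, v_max}` for `j < N`; consequently, positivity of `X(v,k)` for
all `v ∈ V^N` and `k ≤ N` is equivalent to positivity along all extreme paths. -/
theorem extreme_path_reduction (vmin vmax α X0 : ℝ)
    (h1 : -1 < vmin) (h2 : vmin < 0) (h3 : 0 < vmax) (hX0 : 0 < X0)
    (hα0 : 0 ≤ α) (N k : ℕ) (hk : k ≤ N) :
    (∀ v : ℕ → ℝ, (∀ j < N, vmin ≤ v j ∧ v j ≤ vmax) →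
      ∃ w : ℕ → ℝ, (∀ j < N, w j = vmin ∨ w j = vmax) ∧
        accountX α X0 w k ≤ accountX α X0 v k) ∧
    ((∀ v : ℕ → ℝ, (∀ j < N, vmin ≤ v j ∧ v j ≤ vmax) →
        ∀ k' ≤ N, 0 < accountX α X0 v k') ↔
      (∀ w : ℕ → ℝ, (∀ j < N, w j = vmin ∨ w j = vmax) →
        ∀ k' ≤ N, 0 < accountX α X0 w k')) := by
  have hmm : vmin ≤ vmax := le_trans h2.le h3.le
  have key : ∀ k' ≤ N, ∀ v : ℕ → ℝ, (∀ j < N, vmin ≤ v j ∧ v j ≤ vmax) →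
      ∃ w : ℕ → ℝ, (∀ j < N, w j = vmin ∨ w j = vmax) ∧
        accountX α X0 w k' ≤ accountX α X0 v k' := by
    intro k' hk' v hv
    set v' : ℕ → ℝ := fun j => if j < N then v j else vmin with hv'def
    have hv'b : ∀ j, vmin ≤ v' j ∧ v' j ≤ vmax := by
      intro j
      simp only [hv'def]
      split
      · exact hv j (by assumption)
      · exact ⟨le_refl _, hmm⟩
    obtain ⟨w, hwb, hwe, hwle⟩ := reduce vmin vmax α X0 hmm k' N v' hv'b
    have heq : accountX α X0 v' k' = accountX α X0 v k' := by
      apply accountX_congr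
      intro i hi
      simp only [hv'def, if_pos (show i < N by omega)]
    exact ⟨w, fun j hj => hwe j hj, by rw [← heq]; exact hwle⟩
  refine ⟨key k hk, ?_, ?_⟩
  · intro h w hw k' hk'
    refine h w (fun j hj => ?_) k' hk'
    rcases hw j hj with h' | h' <;> rw [h']
    · exact ⟨le_refl _, hmm⟩
    · exact ⟨hmm, le_refl _⟩
  · intro h v hv k' hk'
    obtain ⟨w, hwe, hwle⟩ := key k' hk' v hv
    exact lt_of_lt_of_le (h w hwe k' hk') hwle
end
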